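/- arXiv:1405.3540 — 3 statements merged into one kernel-verified Lean document; each statement's English description precedes it below -/
import Mathlib

section
/- Let q ≥ 1 and define h : ℝ^q → ℝ^q by h(a) = (6|a|⁴ − 15|a|³ + 10|a|²) a for |a| ≤ 1 and h(a) = a/|a| for |a| > 1. Then h is a C² function on ℝ^q and h(ℝ^q) equals the closed unit ball of ℝ^q; moreover h restricted to the open unit ball is a surjection onto the open unit ball. -/
set_option maxHeartbeats 1000000
set_option synthInstance.maxHeartbeats 2000000
open Real Topology Asymptotics Filter Set

section helpers
variable {E : Type*} [NormedAddCommGroup E] [NormedSpace ℝ E]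
variable {F : Type*} [NormedAddCommGroup F] [NormedSpace ℝ F]

lemma hasFDerivAt_zero_helper {f : E → F} {K : E → ℝ}
    (hf0 : f 0 = 0) (hb : ∀ᶠ x in 𝓝 (0 : E), ‖f x‖ ≤ K x * ‖x‖)
    (hK : Filter.Tendsto K (𝓝 (0 : E)) (𝓝 (0 : ℝ))) :
    HasFDerivAt f (0 : E →L[ℝ] F) 0 := by
  rw [hasFDerivAt_iff_tendsto]
  simp only [sub_zero, hf0, ContinuousLinearMap.zero_apply]
  apply squeeze_zero_norm' (a := fun x => |K x|) ?_ (by simpa using hK.abs)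
  filter_upwards [hb] with x hx
  rcases eq_or_ne x 0 with rfl | hx0
  · simp
  · have h1 : 0 < ‖x‖ := norm_pos_iff.mpr hx0
    have h2 : ‖x‖⁻¹ * ‖f x‖ ≤ K x := by
      calc ‖x‖⁻¹ * ‖f x‖ ≤ ‖x‖⁻¹ * (K x * ‖x‖) := by gcongr
        _ = K x := by field_simp
    have h3 : (0:ℝ) ≤ ‖x‖⁻¹ * ‖f x‖ := by positivity
    rw [Real.norm_eq_abs, abs_of_nonneg h3]
    exact h2.trans (le_abs_self _)

lemma hasDerivAt_zero_helper {f : ℝ → ℝ} {K : ℝ → ℝ}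
    (hf0 : f 0 = 0) (hb : ∀ᶠ x in 𝓝 (0 : ℝ), ‖f x‖ ≤ K x * ‖x‖)
    (hK : Filter.Tendsto K (𝓝 (0 : ℝ)) (𝓝 (0 : ℝ))) :
    HasDerivAt f 0 0 := by
  simpa using (hasFDerivAt_zero_helper hf0 hb hK).hasDerivAt

end helpers

noncomputable def rcube (t : ℝ) : ℝ := (max t 0)^3

lemma hasDerivAt_rcube (t : ℝ) : HasDerivAt rcube (3*(max t 0)^2) t := by
  rcases lt_trichotomy t 0 with ht | rfl | ht
  · have hev : rcube =ᶠ[𝓝 t] fun _ => (0:ℝ) := by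
      filter_upwards [Iio_mem_nhds ht] with s hs
      simp [rcube, max_eq_right (mem_Iio.mp hs).le]
    have h2 := (hasDerivAt_const t (0:ℝ)).congr_of_eventuallyEq hev
    have e : (3:ℝ)*(max t 0)^2 = 0 := by rw [max_eq_right ht.le]; ring
    rw [e]; exact h2
  · have h0 : (3:ℝ)*(max (0:ℝ) 0)^2 = 0 := by simp
    rw [h0]
    apply hasDerivAt_zero_helper (K := fun s => s^2) (by simp [rcube])
    · filter_upwards with s
      have h1 : |max s 0| ≤ |s| := by
        rcases le_or_gt s 0 with h | h
        · simp [max_eq_right h]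
        · rw [max_eq_left h.le]
      calc ‖rcube s‖ = |max s 0|^3 := by rw [rcube, Real.norm_eq_abs, abs_pow]
        _ ≤ |s|^3 := by gcongr
        _ = s^2 * ‖s‖ := by rw [Real.norm_eq_abs, pow_succ, sq_abs]
    · have : Continuous fun s : ℝ => s^2 := by continuity
      simpa using this.tendsto 0
  · have hev : rcube =ᶠ[𝓝 t] fun s => s^3 := by
      filter_upwards [Ioi_mem_nhds ht] with s hs
      simp [rcube, max_eq_left (mem_Ioi.mp hs).le]
    have h2 := (hasDerivAt_pow 3 t).congr_of_eventuallyEq hev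
    have e : (3:ℝ)*(max t 0)^2 = ((3:ℕ):ℝ) * t^(3-1) := by rw [max_eq_left ht.le]; norm_num
    rw [e]; exact h2

lemma hasDerivAt_rsq (t : ℝ) : HasDerivAt (fun s : ℝ => 3*(max s 0)^2) (6*(max t 0)) t := by
  rcases lt_trichotomy t 0 with ht | rfl | ht
  · have hev : (fun s : ℝ => 3*(max s 0)^2) =ᶠ[𝓝 t] fun _ => (0:ℝ) := by
      filter_upwards [Iio_mem_nhds ht] with s hs
      simp [max_eq_right (mem_Iio.mp hs).le]
    have h2 := (hasDerivAt_const t (0:ℝ)).congr_of_eventuallyEq hev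
    have e : (6:ℝ)*(max t 0) = 0 := by rw [max_eq_right ht.le]; ring
    rw [e]; exact h2
  · have h0 : (6:ℝ)*(max (0:ℝ) 0) = 0 := by simp
    rw [h0]
    apply hasDerivAt_zero_helper (K := fun s => 3*|s|) (by simp)
    · filter_upwards with s
      have h1 : |max s 0| ≤ |s| := by
        rcases le_or_gt s 0 with h | h
        · simp [max_eq_right h]
        · rw [max_eq_left h.le]
      calc ‖3*(max s 0)^2‖ = 3 * |max s 0|^2 := by
            rw [Real.norm_eq_abs, abs_mul, abs_pow]; norm_num
        _ ≤ 3 * (|s| * |s|) := by rw [sq]; gcongr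
        _ = 3*|s| * ‖s‖ := by rw [Real.norm_eq_abs]; ring
    · have : Continuous fun s : ℝ => 3*|s| := by continuity
      simpa using this.tendsto 0
  · have hev : (fun s : ℝ => 3*(max s 0)^2) =ᶠ[𝓝 t] fun s => 3*s^2 := by
      filter_upwards [Ioi_mem_nhds ht] with s hs
      simp [max_eq_left (mem_Ioi.mp hs).le]
    have h2 : HasDerivAt (fun s : ℝ => 3*s^2) (3*(2*t)) t := by
      simpa using ((hasDerivAt_pow 2 t).const_mul (3:ℝ))
    have h3 := h2.congr_of_eventuallyEq hev
    have e : (6:ℝ)*(max t 0) = 3*(2*t) := by rw [max_eq_left ht.le]; ring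
    rw [e]; exact h3

lemma contDiff_rcube : ContDiff ℝ 2 rcube := by
  have hd1 : deriv rcube = fun t : ℝ => 3*(max t 0)^2 := funext fun t => (hasDerivAt_rcube t).deriv
  rw [← one_add_one_eq_two, contDiff_succ_iff_deriv]
  refine ⟨fun t => (hasDerivAt_rcube t).differentiableAt, by simp, ?_⟩
  rw [hd1, contDiff_one_iff_deriv]
  have hd2 : deriv (fun t : ℝ => 3*(max t 0)^2) = fun t : ℝ => 6*(max t 0) :=
    funext fun t => (hasDerivAt_rsq t).deriv
  refine ⟨fun t => (hasDerivAt_rsq t).differentiableAt, ?_⟩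
  rw [hd2]
  exact continuous_const.mul (continuous_id.max continuous_const)
open Real Topology Asymptotics Filter Set ContinuousLinearMap

variable {E : Type*} [NormedAddCommGroup E] [InnerProductSpace ℝ E]

noncomputable def Lmap (E : Type*) [NormedAddCommGroup E] [InnerProductSpace ℝ E] :
    E →L[ℝ] E →L[ℝ] E →L[ℝ] E :=
  (ContinuousLinearMap.smulRightL ℝ E E).comp (innerSL ℝ)

noncomputable def Bmap (a : E) : E →L[ℝ] E := (innerSL ℝ a).smulRight a

lemma norm_Bmap_le (a : E) : ‖Bmap a‖ ≤ ‖a‖^2 := by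
  rw [Bmap, ContinuousLinearMap.norm_smulRight_apply, innerSL_apply_norm, sq]

lemma continuous_Bmap : Continuous (Bmap : E → E →L[ℝ] E) :=
  (Lmap E).continuous.clm_apply continuous_id

noncomputable def Psi (a : E) : E →L[ℝ] E →L[ℝ] E := Lmap E a + (Lmap E).flip a

lemma continuous_Psi : Continuous (Psi : E → E →L[ℝ] E →L[ℝ] E) :=
  (Lmap E).continuous.add (Lmap E).flip.continuous

lemma hasFDerivAt_Bmap (a : E) : HasFDerivAt (Bmap : E → E →L[ℝ] E) (Psi a) a := by
  have h := ((Lmap E).hasFDerivAt (x := a)).clm_apply (hasFDerivAt_id a)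
  have he : ((Lmap E a).comp (ContinuousLinearMap.id ℝ E)) + (Lmap E).flip (id a) = Psi a := by
    rw [ContinuousLinearMap.comp_id]; rfl
  rw [he] at h
  exact h

lemma hasFDerivAt_norm' {a : E} (ha : a ≠ 0) :
    HasFDerivAt (fun x : E => ‖x‖) (‖a‖⁻¹ • innerSL ℝ a) a := by
  have h2 : HasFDerivAt (fun x : E => ‖x‖ ^ 2) (2 • (innerSL ℝ a)) a :=
    (hasStrictFDerivAt_norm_sq a).hasFDerivAt
  have hne : ‖a‖ ^ 2 ≠ 0 := pow_ne_zero _ (norm_ne_zero_iff.mpr ha)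
  have h3 := h2.sqrt hne
  simp only [Real.sqrt_sq (norm_nonneg a)] at h3
  have hn0 : ‖a‖ ≠ 0 := norm_ne_zero_iff.mpr ha
  have heq : (1 / (2 * ‖a‖)) • (2 : ℕ) • (innerSL ℝ) a = ‖a‖⁻¹ • (innerSL ℝ) a := by
    ext v
    simp only [ContinuousLinearMap.smul_apply, smul_eq_mul, two_smul,
      ContinuousLinearMap.add_apply]
    field_simp
    ring
  have hfun : (fun y : E => √(‖y‖ ^ 2)) = fun y : E => ‖y‖ := by
    funext y; exact Real.sqrt_sq (norm_nonneg y)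
  rw [hfun, heq] at h3
  exact h3

noncomputable def Gmap (a : E) : E →L[ℝ] E := ‖a‖ • Bmap a

noncomputable def Gd (a : E) : E →L[ℝ] E →L[ℝ] E :=
  (‖a‖⁻¹ • innerSL ℝ a).smulRight (Bmap a) + ‖a‖ • Psi a

lemma hasFDerivAt_Gmap (a : E) : HasFDerivAt (Gmap : E → E →L[ℝ] E) (Gd a) a := by
  rcases eq_or_ne a 0 with rfl | ha
  · have h0 : Gd (0 : E) = 0 := by
      ext v w
      simp [Gd, Bmap, Psi, Lmap]
    rw [h0]
    apply hasFDerivAt_zero_helper (K := fun x : E => ‖x‖^2)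
    · simp [Gmap]
    · filter_upwards with x
      calc ‖Gmap x‖ = ‖x‖ * ‖Bmap x‖ := by
            rw [Gmap, norm_smul ‖x‖ (Bmap x), Real.norm_eq_abs, abs_of_nonneg (norm_nonneg x)]
        _ ≤ ‖x‖ * ‖x‖^2 := by gcongr; exact norm_Bmap_le x
        _ = ‖x‖^2 * ‖x‖ := by ring
    · have : Continuous fun x : E => ‖x‖^2 := by continuity
      simpa using this.tendsto 0
  · have h := (hasFDerivAt_norm' ha).smul (hasFDerivAt_Bmap a)
    rw [add_comm] at h
    exact h

lemma continuous_Gd : Continuous (Gd : E → E →L[ℝ] E →L[ℝ] E) := by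
  have hU : Continuous fun a : E => (innerSL ℝ a).smulRight (Bmap a) := by
    have h1 : Continuous fun a : E =>
        (ContinuousLinearMap.smulRightL ℝ E (E →L[ℝ] E)).comp (innerSL ℝ) a :=
      ((ContinuousLinearMap.smulRightL ℝ E (E →L[ℝ] E)).comp (innerSL ℝ)).continuous
    exact h1.clm_apply continuous_Bmap
  have hUnorm : ∀ a : E, ‖(innerSL ℝ a).smulRight (Bmap a)‖ ≤ ‖a‖^3 := by
    intro a
    rw [ContinuousLinearMap.norm_smulRight_apply, innerSL_apply_norm]
    calc ‖a‖ * ‖Bmap a‖ ≤ ‖a‖ * ‖a‖^2 := by gcongr; exact norm_Bmap_le a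
      _ = ‖a‖^3 := by ring
  have hT : Continuous fun a : E => (‖a‖⁻¹ • innerSL ℝ a).smulRight (Bmap a) := by
    have hTeq : (fun a : E => (‖a‖⁻¹ • innerSL ℝ a).smulRight (Bmap a))
        = fun a : E => ‖a‖⁻¹ • (innerSL ℝ a).smulRight (Bmap a) := by
      funext a; ext v w
      simp [ContinuousLinearMap.smul_apply, smul_smul]
    rw [hTeq]
    rw [continuous_iff_continuousAt]
    intro a
    rcases eq_or_ne a 0 with rfl | ha
    · have hz : ‖(0:E)‖⁻¹ • (innerSL ℝ (0:E)).smulRight (Bmap (0:E)) = 0 := by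
        rw [norm_zero, inv_zero]; ext v w; simp
      have hsq : Tendsto (fun x : E => ‖x‖⁻¹ • (innerSL ℝ x).smulRight (Bmap x)) (𝓝 0) (𝓝 0) := by
        have hb : ∀ x : E, ‖‖x‖⁻¹ • (innerSL ℝ x).smulRight (Bmap x)‖ ≤ ‖x‖^2 := by
          intro x
          rcases eq_or_ne x 0 with rfl | hx
          · rw [hz]
            simp [ContinuousLinearMap.opNorm_zero]
          · have h1 : (0:ℝ) < ‖x‖ := norm_pos_iff.mpr hx
            calc ‖‖x‖⁻¹ • (innerSL ℝ x).smulRight (Bmap x)‖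
                ≤ ‖‖x‖⁻¹‖ * ‖(innerSL ℝ x).smulRight (Bmap x)‖ :=
                  ContinuousLinearMap.opNorm_smul_le _ _
              _ ≤ ‖x‖⁻¹ * ‖x‖^3 := by
                  rw [Real.norm_eq_abs, abs_of_nonneg (by positivity)]
                  gcongr; exact hUnorm x
              _ = ‖x‖^2 := by field_simp
        have ht : Tendsto (fun x : E => ‖x‖^2) (𝓝 0) (𝓝 0) := by
          have : Continuous fun x : E => ‖x‖^2 := by continuity
          simpa using this.tendsto 0
        exact squeeze_zero_norm
          (f := fun x : E => ‖x‖⁻¹ • (innerSL ℝ x).smulRight (Bmap x))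
          (a := fun x : E => ‖x‖^2) hb ht
      unfold ContinuousAt
      beta_reduce
      rw [hz]
      exact hsq
    · exact ((continuous_norm.continuousAt).inv₀ (norm_ne_zero_iff.mpr ha)).smul
        hU.continuousAt
  exact hT.add (continuous_norm.smul continuous_Psi)
lemma contDiffAt_Gmap_zero : ContDiffAt ℝ 1 (Gmap : E → E →L[ℝ] E) 0 := by
  have h := (contDiffAt_succ_iff_hasFDerivAt (n := 0)
      (f := (Gmap : E → E →L[ℝ] E)) (x := (0:E))).mpr
    ⟨Gd, ⟨Set.univ, Filter.univ_mem, fun x _ => hasFDerivAt_Gmap x⟩,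
      (contDiff_zero.mpr continuous_Gd).contDiffAt⟩
  simpa using h

noncomputable def mmap (a : E) : E := ‖a‖^3 • a

noncomputable def Dmap (a : E) : E →L[ℝ] E :=
  ‖a‖^3 • ContinuousLinearMap.id ℝ E + ((3*‖a‖) • innerSL ℝ a).smulRight a

lemma hasFDerivAt_mmap (a : E) : HasFDerivAt (mmap : E → E) (Dmap a) a := by
  have h := (hasFDerivAt_norm_rpow a (p := 3) (by norm_num)).smul (hasFDerivAt_id a)
  have e1 : ∀ y : E, ‖y‖^(3:ℝ) = ‖y‖^(3:ℕ) := by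
    intro y
    rw [show (3:ℝ) = ((3:ℕ):ℝ) by norm_num, Real.rpow_natCast]
  have hfun : ((fun y : E => ‖y‖^(3:ℝ)) • id) = (mmap : E → E) := by
    funext y
    simp only [Pi.smul_apply', Pi.smul_apply, _root_.id_eq, mmap, e1]
  rw [hfun] at h
  have e2 : (3*‖a‖^((3:ℝ)-2)) • innerSL ℝ a = (3*‖a‖) • innerSL ℝ a := by
    norm_num [Real.rpow_one]
  rw [e1 a, e2] at h
  exact h

lemma contDiffAt_mmap_zero : ContDiffAt ℝ 2 (mmap : E → E) 0 := by
  have h1 : ContDiff ℝ 1 (fun a : E => ‖a‖^(3:ℕ)) := by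
    have h := contDiff_norm_rpow (E := E) (p := 3) (by norm_num)
    have e1 : (fun x : E => ‖x‖^(3:ℝ)) = fun x : E => ‖x‖^(3:ℕ) := by
      funext x
      rw [show (3:ℝ) = ((3:ℕ):ℝ) by norm_num, Real.rpow_natCast]
    rwa [e1] at h
  have hpart1 : ContDiff ℝ 1 (fun a : E => ‖a‖^3 • ContinuousLinearMap.id ℝ E) :=
    h1.smul contDiff_const
  have hpart2 : ContDiffAt ℝ 1 (fun a : E => ((3*‖a‖) • innerSL ℝ a).smulRight a) 0 := by
    have h3 : ContDiffAt ℝ 1 (fun a : E => (3:ℝ) • Gmap a) 0 :=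
      (contDiffAt_const (c := (3:ℝ))).smul contDiffAt_Gmap_zero
    have he : (fun a : E => (3:ℝ) • Gmap a)
        = fun a : E => ((3*‖a‖) • innerSL ℝ a).smulRight a := by
      funext a
      ext v
      simp [Gmap, Bmap, smul_smul]
    rwa [he] at h3
  have hD : ContDiffAt ℝ 1 (Dmap : E → E →L[ℝ] E) 0 := by
    have := hpart1.contDiffAt.add hpart2
    exact this
  have h := (contDiffAt_succ_iff_hasFDerivAt (n := 1)
      (f := (mmap : E → E)) (x := (0:E))).mpr
    ⟨Dmap, ⟨Set.univ, Filter.univ_mem, fun x _ => hasFDerivAt_mmap x⟩, hD⟩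
  simpa [one_add_one_eq_two] using h
/-- The map `h : ℝ^q → ℝ^q`, `h(a) = (6|a|⁴ − 15|a|³ + 10|a|²) a` for `|a| ≤ 1`,
`h(a) = a/|a|` for `|a| > 1`. -/
noncomputable def hmap (q : ℕ) :
    EuclideanSpace ℝ (Fin q) → EuclideanSpace ℝ (Fin q) :=
  fun a => if ‖a‖ ≤ 1 then (6 * ‖a‖ ^ 4 - 15 * ‖a‖ ^ 3 + 10 * ‖a‖ ^ 2) • a else ‖a‖⁻¹ • a

lemma contDiffAt_hmap_zero (q : ℕ) : ContDiffAt ℝ 2 (hmap q) 0 := by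
  have hsq : ContDiff ℝ 2 (fun a : EuclideanSpace ℝ (Fin q) => ‖a‖^2) := contDiff_norm_sq ℝ
  have s1 : ContDiff ℝ 2 (fun a : EuclideanSpace ℝ (Fin q) => 6*(‖a‖^2*‖a‖^2) + 10*‖a‖^2) :=
    (contDiff_const.mul (hsq.mul hsq)).add (contDiff_const.mul hsq)
  have s2 : ContDiff ℝ 2 (fun a : EuclideanSpace ℝ (Fin q) => (6*(‖a‖^2*‖a‖^2) + 10*‖a‖^2) • a) :=
    s1.smul contDiff_id
  have s3 : ContDiffAt ℝ 2
      (fun a : EuclideanSpace ℝ (Fin q) => (6*(‖a‖^2*‖a‖^2) + 10*‖a‖^2) • a - (15:ℝ) • mmap a)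
      0 := s2.contDiffAt.sub ((contDiffAt_const (c := (15:ℝ))).smul contDiffAt_mmap_zero)
  apply s3.congr_of_eventuallyEq
  filter_upwards [Metric.ball_mem_nhds (0 : EuclideanSpace ℝ (Fin q)) one_pos] with x hx
  have hx1 : ‖x‖ ≤ 1 := le_of_lt (mem_ball_zero_iff.mp hx)
  rw [hmap, if_pos hx1, mmap, smul_smul, ← sub_smul]
  congr 1
  ring

lemma contDiffAt_hmap_ne_zero (q : ℕ) {a : EuclideanSpace ℝ (Fin q)} (ha : a ≠ 0) :
    ContDiffAt ℝ 2 (hmap q) a := by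
  have hn : ContDiffAt ℝ 2 (fun x : EuclideanSpace ℝ (Fin q) => ‖x‖) a := contDiffAt_norm ℝ ha
  have hnum : ContDiffAt ℝ 2
      (fun x : EuclideanSpace ℝ (Fin q) => 1 - rcube (1-‖x‖) * (6*(‖x‖*‖x‖)+3*‖x‖+1)) a :=
    contDiffAt_const.sub ((contDiff_rcube.contDiffAt.comp a (contDiffAt_const.sub hn)).mul
      (((contDiffAt_const.mul (hn.mul hn)).add (contDiffAt_const.mul hn)).add contDiffAt_const))
  have hF : ContDiffAt ℝ 2
      (fun x : EuclideanSpace ℝ (Fin q) =>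
        ((1 - rcube (1-‖x‖) * (6*(‖x‖*‖x‖)+3*‖x‖+1)) / ‖x‖) • x) a :=
    (hnum.div hn (norm_ne_zero_iff.mpr ha)).smul contDiffAt_id
  apply hF.congr_of_eventuallyEq
  filter_upwards [IsOpen.mem_nhds isOpen_compl_singleton
    (Set.mem_compl_singleton_iff.mpr ha)] with x hx
  have hx0 : x ≠ 0 := Set.mem_compl_singleton_iff.mp hx
  have hr : (0:ℝ) < ‖x‖ := norm_pos_iff.mpr hx0
  rcases le_or_gt ‖x‖ 1 with h1 | h1
  · rw [hmap, if_pos h1]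
    congr 1
    have hmax : max (1-‖x‖) 0 = 1-‖x‖ := max_eq_left (by linarith)
    rw [rcube, hmax, eq_comm, div_eq_iff hr.ne']
    ring
  · rw [hmap, if_neg (not_le.mpr h1)]
    congr 1
    have hmax : max (1-‖x‖) 0 = 0 := max_eq_right (by linarith)
    rw [rcube, hmax]
    norm_num [one_div]
lemma phi_nonneg {r : ℝ} (h0 : 0 ≤ r) : 0 ≤ 6*r^4-15*r^3+10*r^2 := by
  nlinarith [sq_nonneg r, sq_nonneg (4*r-5), mul_nonneg (sq_nonneg r) (sq_nonneg (4*r-5))]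

lemma g_le_one {r : ℝ} (h0 : 0 ≤ r) (h1 : r ≤ 1) : (6*r^4-15*r^3+10*r^2)*r ≤ 1 := by
  have h2 : (0:ℝ) ≤ (1-r)^3 := pow_nonneg (by linarith) 3
  have h3 : (0:ℝ) ≤ 6*r^2+3*r+1 := by nlinarith [sq_nonneg r]
  nlinarith [mul_nonneg h2 h3]

lemma g_lt_one {r : ℝ} (h0 : 0 ≤ r) (h1 : r < 1) : (6*r^4-15*r^3+10*r^2)*r < 1 := by
  have h2 : (0:ℝ) < (1-r)^3 := pow_pos (by linarith) 3
  have h3 : (0:ℝ) < 6*r^2+3*r+1 := by nlinarith [sq_nonneg r]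
  nlinarith [mul_pos h2 h3]

lemma exists_g_eq {c : ℝ} (h0 : 0 ≤ c) (h1 : c ≤ 1) :
    ∃ t, 0 ≤ t ∧ t ≤ 1 ∧ (6*t^4-15*t^3+10*t^2)*t = c := by
  have hc : Continuous fun r : ℝ => (6*r^4-15*r^3+10*r^2)*r := by continuity
  have hiv := intermediate_value_Icc (by norm_num : (0:ℝ) ≤ 1) hc.continuousOn
  norm_num at hiv
  obtain ⟨t, ht, hteq⟩ := hiv (Set.mem_Icc.mpr ⟨h0, h1⟩)
  exact ⟨t, (Set.mem_Icc.mp ht).1, (Set.mem_Icc.mp ht).2, hteq⟩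

lemma hmap_zero (q : ℕ) : hmap q 0 = 0 := by
  simp [hmap]

lemma norm_hmap_of_le (q : ℕ) (a : EuclideanSpace ℝ (Fin q)) (h : ‖a‖ ≤ 1) :
    ‖hmap q a‖ = (6*‖a‖^4-15*‖a‖^3+10*‖a‖^2)*‖a‖ := by
  rw [hmap]
  simp only [if_pos h]
  rw [norm_smul, Real.norm_eq_abs, abs_of_nonneg (phi_nonneg (norm_nonneg a))]

lemma norm_hmap_le (q : ℕ) (a : EuclideanSpace ℝ (Fin q)) : ‖hmap q a‖ ≤ 1 := by
  rcases le_or_gt ‖a‖ 1 with h | h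
  · rw [norm_hmap_of_le q a h]
    exact g_le_one (norm_nonneg a) h
  · rw [hmap]
    simp only [if_neg (not_le.mpr h)]
    have h0 : (0:ℝ) < ‖a‖ := by linarith
    rw [norm_smul, Real.norm_eq_abs, abs_of_nonneg (by positivity), inv_mul_cancel₀ h0.ne']

lemma norm_hmap_lt (q : ℕ) (a : EuclideanSpace ℝ (Fin q)) (h : ‖a‖ < 1) : ‖hmap q a‖ < 1 := by
  rw [norm_hmap_of_le q a h.le]
  exact g_lt_one (norm_nonneg a) h

lemma hmap_surj (q : ℕ) (b : EuclideanSpace ℝ (Fin q)) (hb : ‖b‖ ≤ 1) :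
    ∃ a : EuclideanSpace ℝ (Fin q), ‖a‖ ≤ 1 ∧ (‖b‖ < 1 → ‖a‖ < 1) ∧ hmap q a = b := by
  rcases eq_or_ne b 0 with rfl | hb0
  · exact ⟨0, by simp, fun _ => by simp [one_pos], hmap_zero q⟩
  · have hbpos : (0:ℝ) < ‖b‖ := norm_pos_iff.mpr hb0
    obtain ⟨t, ht0, ht1, htg⟩ := exists_g_eq (le_of_lt hbpos) hb
    have hna : ‖(t/‖b‖) • b‖ = t := by
      rw [norm_smul, Real.norm_eq_abs, abs_of_nonneg (by positivity),
        div_mul_cancel₀ _ hbpos.ne']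
    refine ⟨(t/‖b‖) • b, by rw [hna]; exact ht1, ?_, ?_⟩
    · intro hblt
      rw [hna]
      rcases lt_or_eq_of_le ht1 with h | h
      · exact h
      · exfalso
        rw [h] at htg
        norm_num at htg
        linarith
    · rw [hmap, if_pos (by rw [hna]; exact ht1), hna, smul_smul]
      have hs : (6*t^4-15*t^3+10*t^2)*(t/‖b‖) = 1 := by
        field_simp
        linarith [htg]
      rw [hs, one_smul]

theorem stmt1 (q : ℕ) (hq : 1 ≤ q) :
    ContDiff ℝ 2 (hmap q) ∧
    Set.range (hmap q) = Metric.closedBall (0 : EuclideanSpace ℝ (Fin q)) 1 ∧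
    hmap q '' Metric.ball (0 : EuclideanSpace ℝ (Fin q)) 1
      = Metric.ball (0 : EuclideanSpace ℝ (Fin q)) 1 := by
  refine ⟨?_, ?_, ?_⟩
  · rw [contDiff_iff_contDiffAt]
    intro a
    rcases eq_or_ne a 0 with rfl | ha
    · exact contDiffAt_hmap_zero q
    · exact contDiffAt_hmap_ne_zero q ha
  · apply Set.Subset.antisymm
    · rintro _ ⟨a, rfl⟩
      rw [Metric.mem_closedBall, dist_zero_right]
      exact norm_hmap_le q a
    · intro b hb
      rw [Metric.mem_closedBall, dist_zero_right] at hb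
      obtain ⟨a, -, -, ha⟩ := hmap_surj q b hb
      exact ⟨a, ha⟩
  · apply Set.Subset.antisymm
    · rintro _ ⟨a, haball, rfl⟩
      rw [Metric.mem_ball, dist_zero_right] at *
      exact norm_hmap_lt q a haball
    · intro b hb
      rw [Metric.mem_ball, dist_zero_right] at hb
      obtain ⟨a, -, halt, ha⟩ := hmap_surj q b hb.le
      exact ⟨a, by rw [Metric.mem_ball, dist_zero_right]; exact halt hb, ha⟩
end

section
/- Let O ⊆ ℝ^q be open and connected and let u : O → ℝ be lower semicontinuous and locally bounded. Suppose u is a viscosity supersolution of −|Du| = 0 on O, i.e. for every a ∈ O and every C¹ function φ on O such that u − φ attains a local minimum at a, one has Dφ(a) = 0. Then u is constant on O. -/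
set_option maxHeartbeats 1000000

open Metric Set Filter

/-- Sublevel sets of a lsc function on a closed set are closed. -/
lemma aux_lsc_sublevel_closed {E : Type*} [TopologicalSpace E] {s : Set E} (hs : IsClosed s)
    {f : E → ℝ} (hf : LowerSemicontinuousOn f s) (c : ℝ) :
    IsClosed {x | x ∈ s ∧ f x ≤ c} := by
  rw [← isOpen_compl_iff, isOpen_iff_mem_nhds]
  intro x hx
  by_cases hxs : x ∈ s
  · have hc : c < f x := by
      by_contra h
      exact hx ⟨hxs, not_lt.1 h⟩
    have h1 : ∀ᶠ x' in nhdsWithin x s, c < f x' := hf x hxs c hc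
    rw [eventually_nhdsWithin_iff] at h1
    filter_upwards [h1] with y hy hmem
    exact absurd (hy hmem.1) (not_lt.2 hmem.2)
  · exact mem_of_superset (hs.isOpen_compl.mem_nhds hxs) (fun y hy hmem => hy hmem.1)

/-- A lsc function on a nonempty compact closed set attains its minimum. -/
lemma aux_lsc_exists_min {E : Type*} [TopologicalSpace E] {s : Set E} (hcomp : IsCompact s)
    (hcl : IsClosed s) (hne : s.Nonempty) {f : E → ℝ} (hf : LowerSemicontinuousOn f s) :
    ∃ x ∈ s, ∀ y ∈ s, f x ≤ f y := by
  haveI : Nonempty s := hne.to_subtype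
  set t : s → Set E := fun y => {x | x ∈ s ∧ f x ≤ f y} with ht
  have htd : Directed (· ⊇ ·) t := by
    intro i j
    rcases le_total (f i) (f j) with h | h
    · exact ⟨i, le_refl _, fun x hx => ⟨hx.1, hx.2.trans h⟩⟩
    · exact ⟨j, fun x hx => ⟨hx.1, hx.2.trans h⟩, le_refl _⟩
  have htn : ∀ i, (t i).Nonempty := fun i => ⟨i, i.2, le_refl _⟩
  have htcl : ∀ i, IsClosed (t i) := fun i => aux_lsc_sublevel_closed hcl hf _
  have htc : ∀ i, IsCompact (t i) := fun i =>
    hcomp.of_isClosed_subset (htcl i) (fun x hx => hx.1)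
  obtain ⟨x, hx⟩ := IsCompact.nonempty_iInter_of_directed_nonempty_isCompact_isClosed
    t htd htn htc htcl
  simp only [mem_iInter] at hx
  refine ⟨x, (hx (Classical.arbitrary s)).1, fun y hy => (hx ⟨y, hy⟩).2⟩

/-- If `x ↦ u x + K‖x-y‖²` has a local minimum (near `z`, within everything) at an interior
point `z` of `O`, the viscosity supersolution property forces `z = y`. -/
lemma aux_touch_eq {q : ℕ} (y z : EuclideanSpace ℝ (Fin q)) (K : ℝ) (hK : 0 < K)
    (O : Set (EuclideanSpace ℝ (Fin q))) (u : EuclideanSpace ℝ (Fin q) → ℝ)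
    (hvisc : ∀ a ∈ O, ∀ φ : EuclideanSpace ℝ (Fin q) → ℝ, ContDiff ℝ 1 φ →
      IsLocalMinOn (fun x => u x - φ x) O a → fderiv ℝ φ a = 0)
    (hzO : z ∈ O)
    (hloc : ∀ᶠ x in nhds z, u z + K * ‖z - y‖^2 ≤ u x + K * ‖x - y‖^2) :
    z = y := by
  set φ : EuclideanSpace ℝ (Fin q) → ℝ := fun x => -(K * ‖x - y‖^2) with hφdef
  have hφ : ContDiff ℝ 1 φ := by
    apply ContDiff.neg
    exact contDiff_const.mul (((contDiff_id.sub contDiff_const)).norm_sq (𝕜 := ℝ))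
  have hmin : IsLocalMinOn (fun x => u x - φ x) O z := by
    have h2 : ∀ᶠ x in nhdsWithin z O, u z + K * ‖z - y‖^2 ≤ u x + K * ‖x - y‖^2 :=
      hloc.filter_mono nhdsWithin_le_nhds
    filter_upwards [h2] with x hx
    simpa [φ, sub_neg_eq_add] using hx
  have hD : HasFDerivAt φ (-(K • (2 • ((innerSL ℝ (z - y)).comp
      (ContinuousLinearMap.id ℝ (EuclideanSpace ℝ (Fin q))))))) z := by
    have h0 : HasFDerivAt (fun x : EuclideanSpace ℝ (Fin q) => x - y)
        (ContinuousLinearMap.id ℝ (EuclideanSpace ℝ (Fin q))) z :=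
      (hasFDerivAt_id z).sub_const y
    exact (h0.norm_sq.const_mul K).neg
  have hzero := hvisc z hzO φ hφ hmin
  rw [hD.fderiv] at hzero
  have happ := congrArg (fun L : EuclideanSpace ℝ (Fin q) →L[ℝ] ℝ => L (z - y)) hzero
  simp only [ContinuousLinearMap.neg_apply, ContinuousLinearMap.smul_apply,
    ContinuousLinearMap.coe_comp', Function.comp_apply, ContinuousLinearMap.coe_id', id,
    innerSL_apply_apply, ContinuousLinearMap.zero_apply, smul_eq_mul, neg_eq_zero,
    real_inner_self_eq_norm_sq] at happ
  have h2 : ‖z - y‖ ^ 2 = 0 := by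
    rw [nsmul_eq_mul] at happ; push_cast at happ
    nlinarith [sq_nonneg (‖z - y‖)]
  exact sub_eq_zero.1 (norm_eq_zero.1 (by nlinarith [norm_nonneg (z - y)]))

/-- A lower semicontinuous, locally bounded viscosity supersolution of `−|Du| = 0` on an open
connected set is constant. -/
theorem stmt8 {q : ℕ} (O : Set (EuclideanSpace ℝ (Fin q)))
    (hO : IsOpen O) (hconn : IsConnected O)
    (u : EuclideanSpace ℝ (Fin q) → ℝ)
    (hlsc : LowerSemicontinuousOn u O)
    (hbdd : ∀ a ∈ O, ∃ M : ℝ, ∀ᶠ x in nhds a, |u x| ≤ M)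
    (hvisc : ∀ a ∈ O, ∀ φ : EuclideanSpace ℝ (Fin q) → ℝ, ContDiff ℝ 1 φ →
      IsLocalMinOn (fun x => u x - φ x) O a → fderiv ℝ φ a = 0) :
    ∀ a ∈ O, ∀ b ∈ O, u a = u b := by
  -- Local constancy
  have key : ∀ x0 ∈ O, ∃ ρ > 0, Metric.ball x0 ρ ⊆ O ∧
      ∀ y ∈ Metric.ball x0 ρ, u y = u x0 := by
    intro x0 hx0
    obtain ⟨ε, hε, hball⟩ := Metric.isOpen_iff.1 hO x0 hx0
    set r := ε / 2 with hr
    have hrpos : 0 < r := by positivity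
    have hcb : Metric.closedBall x0 r ⊆ O := fun x hx =>
      hball (Metric.mem_ball.2 (lt_of_le_of_lt (Metric.mem_closedBall.1 hx) (by
        simp only [hr]; linarith)))
    obtain ⟨M, hM⟩ := hbdd x0 hx0
    rw [Metric.eventually_nhds_iff_ball] at hM
    obtain ⟨ρ0, hρ0, hMb⟩ := hM
    have hcomp : IsCompact (Metric.closedBall x0 r) := isCompact_closedBall x0 r
    obtain ⟨xm, hxm, hxmin⟩ := aux_lsc_exists_min hcomp Metric.isClosed_closedBall
      ⟨x0, Metric.mem_closedBall_self hrpos.le⟩ (hlsc.mono hcb)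
    set m := u xm with hm
    have hmM : m ≤ M := le_trans (hxmin x0 (Metric.mem_closedBall_self hrpos.le))
      (le_of_abs_le (hMb x0 (Metric.mem_ball_self hρ0)))
    set K := (M - m + 1) / (r/2)^2 with hKdef
    have hKpos : 0 < K := by
      apply div_pos (by linarith) (by positivity)
    have hKr : K * (r/2)^2 = M - m + 1 := by
      rw [hKdef]; field_simp
    set ρ := min ρ0 (r/4) with hρdef
    have hρpos : 0 < ρ := lt_min hρ0 (by positivity)
    have hρr : ρ ≤ r/4 := min_le_right _ _
    have hρ0' : ρ ≤ ρ0 := min_le_left _ _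
    have hballρ : Metric.ball x0 ρ ⊆ Metric.closedBall x0 r := fun x hx =>
      Metric.mem_closedBall.2 (le_trans (Metric.mem_ball.1 hx).le (by linarith))
    have hballO : Metric.ball x0 ρ ⊆ O := fun x hx => hcb (hballρ hx)
    -- Step A: quadratic touching from below at every point of the small ball
    have stepA : ∀ y ∈ Metric.ball x0 ρ, ∀ x ∈ Metric.closedBall x0 r,
        u y ≤ u x + K * ‖x - y‖^2 := by
      intro y hy
      set G : EuclideanSpace ℝ (Fin q) → ℝ := fun x => u x + K * ‖x - y‖^2 with hG
      have hGlsc : LowerSemicontinuousOn G (Metric.closedBall x0 r) := by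
        apply (hlsc.mono hcb).add
        exact (Continuous.continuousOn (by continuity)).lowerSemicontinuousOn
      obtain ⟨z, hzcb, hzmin⟩ := aux_lsc_exists_min hcomp Metric.isClosed_closedBall
        ⟨x0, Metric.mem_closedBall_self hrpos.le⟩ hGlsc
      have hGzy : G z ≤ u y := by
        have h := hzmin y (hballρ hy)
        simpa [G] using h
      have hzy : ‖z - y‖ < r / 2 := by
        have h1 : u z + K * ‖z - y‖^2 ≤ u y := hGzy
        have h2 : m ≤ u z := hxmin z hzcb
        have h3 : u y ≤ M := le_of_abs_le (hMb y (Metric.mem_ball.2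
          (lt_of_lt_of_le (Metric.mem_ball.1 hy) hρ0')))
        have h4 : K * ‖z - y‖^2 ≤ M - m := by linarith
        have h6 : ‖z - y‖^2 < (r/2)^2 := by
          by_contra h
          push_neg at h
          have := mul_le_mul_of_nonneg_left h hKpos.le
          linarith [hKr ▸ this]
        nlinarith [norm_nonneg (z - y), hrpos]
      have hzball : z ∈ Metric.ball x0 r := by
        rw [Metric.mem_ball]
        have hd1 : dist z y < r / 2 := by rw [dist_eq_norm]; exact hzy
        have hd2 : dist y x0 < r / 4 := lt_of_lt_of_le (Metric.mem_ball.1 hy) hρr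
        calc dist z x0 ≤ dist z y + dist y x0 := dist_triangle _ _ _
          _ < r := by linarith
      have hzO : z ∈ O := hcb (Metric.ball_subset_closedBall hzball)
      have hloc : ∀ᶠ x in nhds z, u z + K * ‖z - y‖^2 ≤ u x + K * ‖x - y‖^2 := by
        filter_upwards [Metric.isOpen_ball.mem_nhds hzball] with x hx
        exact hzmin x (Metric.ball_subset_closedBall hx)
      have hzeq : z = y := aux_touch_eq y z K hKpos O u hvisc hzO hloc
      intro x hx
      have h := hzmin x hx
      rw [hzeq] at h
      simpa [G] using h
    -- Step B: two-sided quadratic bound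
    have stepB : ∀ y ∈ Metric.ball x0 ρ, ∀ z ∈ Metric.ball x0 ρ,
        |u y - u z| ≤ K * ‖z - y‖^2 := by
      intro y hy z hz
      have h1 := stepA y hy z (hballρ hz)
      have h2 := stepA z hz y (hballρ hy)
      rw [norm_sub_rev y z] at h2
      rw [abs_sub_le_iff]
      constructor <;> linarith
    -- Step C: subdivision argument
    refine ⟨ρ, hρpos, hballO, ?_⟩
    intro y hy
    have hx0b : x0 ∈ Metric.ball x0 ρ := Metric.mem_ball_self hρpos
    have habs : ∀ n : ℕ, 0 < n → |u x0 - u y| ≤ K * ‖x0 - y‖^2 / n := by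
      intro n hn
      have hn' : (0:ℝ) < n := Nat.cast_pos.2 hn
      set p : ℕ → EuclideanSpace ℝ (Fin q) := fun i => y + ((i:ℝ)/n) • (x0 - y) with hp
      have hmem : ∀ i ≤ n, p i ∈ Metric.ball x0 ρ := by
        intro i hi
        exact (convex_ball x0 ρ).add_smul_sub_mem hy hx0b
          ⟨by positivity, (div_le_one hn').2 (Nat.cast_le.2 hi)⟩
      have hstep : ∀ i < n, |u (p (i+1)) - u (p i)| ≤ K * (‖x0 - y‖/n)^2 := by
        intro i hi
        have hb := stepB (p (i+1)) (hmem _ (by omega)) (p i) (hmem _ (by omega))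
        have hnorm : ‖p i - p (i+1)‖ = ‖x0 - y‖ / n := by
          have h1 : p i = y + ((i:ℝ)/n) • (x0 - y) := rfl
          have h2 : p (i+1) = y + ((((i+1):ℕ):ℝ)/n) • (x0 - y) := rfl
          have heq : p i - p (i+1) = (((i:ℝ)/n - ((i:ℝ)+1)/n)) • (x0 - y) := by
            rw [h1, h2, add_sub_add_left_eq_sub, ← sub_smul]
            push_cast
            ring_nf
          rw [heq, norm_smul]
          have h3 : ((i:ℝ)/n - ((i:ℝ)+1)/n) = -(1/n) := by field_simp; ring
          rw [h3, norm_neg, norm_div, norm_one, Real.norm_natCast]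
          ring
        rw [hnorm] at hb
        exact hb
      have htel : ∑ i ∈ Finset.range n, (u (p (i+1)) - u (p i)) = u x0 - u y := by
        rw [Finset.sum_range_sub (fun i => u (p i))]
        have hpn : p n = x0 := by
          show y + ((n:ℝ)/n) • (x0 - y) = x0
          rw [div_self (ne_of_gt hn'), one_smul]
          abel
        have hp0 : p 0 = y := by
          show y + (((0:ℕ):ℝ)/n) • (x0 - y) = y
          norm_num
        rw [hpn, hp0]
      have e1 : |u x0 - u y| ≤ ∑ i ∈ Finset.range n, |u (p (i+1)) - u (p i)| := by
        rw [← htel]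
        exact Finset.abs_sum_le_sum_abs _ _
      have e2 : ∑ i ∈ Finset.range n, |u (p (i+1)) - u (p i)|
          ≤ ∑ _i ∈ Finset.range n, K * (‖x0 - y‖/n)^2 := by
        apply Finset.sum_le_sum
        intro i hi
        exact hstep i (Finset.mem_range.1 hi)
      have e3 : ∑ _i ∈ Finset.range n, K * (‖x0 - y‖/n)^2 = K * ‖x0 - y‖^2 / n := by
        rw [Finset.sum_const, Finset.card_range, nsmul_eq_mul]
        field_simp
      linarith
    have hzero : |u x0 - u y| = 0 := by
      by_contra h
      have hpos : 0 < |u x0 - u y| := lt_of_le_of_ne (abs_nonneg _) (Ne.symm h)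
      obtain ⟨n, hn⟩ := exists_nat_gt (K * ‖x0 - y‖^2 / |u x0 - u y|)
      have hn0 : 0 < n := by
        by_contra hn0
        push_neg at hn0
        interval_cases n
        simp only [Nat.cast_zero] at hn
        have : 0 ≤ K * ‖x0 - y‖^2 / |u x0 - u y| := by positivity
        linarith
      have h1 := habs n hn0
      have h2 : K * ‖x0 - y‖^2 / n < |u x0 - u y| := by
        rw [div_lt_iff₀ (Nat.cast_pos.2 hn0)]
        rw [div_lt_iff₀ hpos] at hn
        linarith
      linarith
    have := abs_eq_zero.1 hzero
    linarith [sub_eq_zero.1 this]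
  -- Connectedness argument
  intro a ha b hb
  by_contra hne
  set V : Set (EuclideanSpace ℝ (Fin q)) :=
    {x | ∃ ρ > 0, Metric.ball x ρ ⊆ O ∧ ∀ y ∈ Metric.ball x ρ, u y = u a} with hV
  set W : Set (EuclideanSpace ℝ (Fin q)) :=
    {x | ∃ ρ > 0, Metric.ball x ρ ⊆ O ∧ ∀ y ∈ Metric.ball x ρ, u y ≠ u a} with hW
  have hVopen : IsOpen V := by
    rw [Metric.isOpen_iff]
    rintro x ⟨ρ, hρ, hsub, hconst⟩
    refine ⟨ρ, hρ, fun x' hx' => ?_⟩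
    refine ⟨ρ - dist x' x, by simp [Metric.mem_ball.1 hx'], ?_, ?_⟩
    · intro z hz
      apply hsub
      rw [Metric.mem_ball] at *
      calc dist z x ≤ dist z x' + dist x' x := dist_triangle _ _ _
        _ < ρ := by linarith [Metric.mem_ball.1 hz]
    · intro z hz
      apply hconst
      rw [Metric.mem_ball] at *
      calc dist z x ≤ dist z x' + dist x' x := dist_triangle _ _ _
        _ < ρ := by linarith [Metric.mem_ball.1 hz]
  have hWopen : IsOpen W := by
    rw [Metric.isOpen_iff]
    rintro x ⟨ρ, hρ, hsub, hconst⟩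
    refine ⟨ρ, hρ, fun x' hx' => ?_⟩
    refine ⟨ρ - dist x' x, by simp [Metric.mem_ball.1 hx'], ?_, ?_⟩
    · intro z hz
      apply hsub
      rw [Metric.mem_ball] at *
      calc dist z x ≤ dist z x' + dist x' x := dist_triangle _ _ _
        _ < ρ := by linarith [Metric.mem_ball.1 hz]
    · intro z hz
      apply hconst
      rw [Metric.mem_ball] at *
      calc dist z x ≤ dist z x' + dist x' x := dist_triangle _ _ _
        _ < ρ := by linarith [Metric.mem_ball.1 hz]
  have hcover : O ⊆ V ∪ W := by
    intro x hx
    obtain ⟨ρ, hρ, hsub, hconst⟩ := key x hx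
    by_cases hcase : u x = u a
    · left; exact ⟨ρ, hρ, hsub, fun y hy => (hconst y hy).trans hcase⟩
    · right; exact ⟨ρ, hρ, hsub, fun y hy => (hconst y hy) ▸ hcase⟩
  have haV : a ∈ O ∩ V := by
    obtain ⟨ρ, hρ, hsub, hconst⟩ := key a ha
    exact ⟨ha, ρ, hρ, hsub, hconst⟩
  have hbW : b ∈ O ∩ W := by
    obtain ⟨ρ, hρ, hsub, hconst⟩ := key b hb
    refine ⟨hb, ρ, hρ, hsub, fun y hy => ?_⟩
    rw [hconst y hy]
    exact fun hc => hne (hc ▸ rfl)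
  obtain ⟨x, hxO, hxV, hxW⟩ := hconn.isPreconnected V W hVopen hWopen hcover
    ⟨a, haV⟩ ⟨b, hbW⟩
  obtain ⟨ρ1, hρ1, _, hc1⟩ := hxV
  obtain ⟨ρ2, hρ2, _, hc2⟩ := hxW
  exact hc2 x (Metric.mem_ball_self hρ2) (hc1 x (Metric.mem_ball_self hρ1))
end

section
/- Let E ⊆ ℝ^k, A compact, β : ℝ^d × A × E → ℝ^d with |β(x,a,e)| ≤ C(1+|x|)(1 ∧ |e|), and λ(a,·) measures on E. Fix (t,x) and δ > 0, and let ψ, φ ∈ C^{1,2}([0,T]×ℝ^d) coincide on a neighborhood of (t,x) with the same value, time derivative, and spatial gradient at (t,x). Suppose further that for every ε > 0, sup_{a∈A} ∫_{E∩{|e|≤δ}} (1 ∧ |e|² ∧ ε) λ(a,de) → 0 as ε → 0⁺, and let ψ_ε = χ_ε ψ + (1−χ_ε) φ with χ_ε a cutoff equal to 1 on the ε-ball around (t,x) and 0 outside the 2ε-ball. Then sup_{a∈A} | I¹_a(t,x,ψ_ε) − I¹_a(t,x,φ) | → 0 as ε → 0⁺, where I¹_a(t,x,φ) = ∫_{E∩{|e|≤δ}}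 ( φ(t, x+β(x,a,e)) − φ(t,x) − β(x,a,e)·D_xφ(t,x) ) λ(a,de). -/
open MeasureTheory

/-- The small-jump part `I¹_a` of the nonlocal operator, for a test function `f`. -/
noncomputable def I1 {d k : ℕ} {A : Type*}
    (μ : A → Measure (EuclideanSpace ℝ (Fin k)))
    (Eset : Set (EuclideanSpace ℝ (Fin k))) (δ : ℝ)
    (β : EuclideanSpace ℝ (Fin d) → A → EuclideanSpace ℝ (Fin k) → EuclideanSpace ℝ (Fin d))
    (t : ℝ) (x : EuclideanSpace ℝ (Fin d))
    (f : ℝ × EuclideanSpace ℝ (Fin d) → ℝ) (a : A) : ℝ :=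
  ∫ e in Eset ∩ {e | ‖e‖ ≤ δ},
    (f (t, x + β x a e) - f (t, x) - fderiv ℝ (fun y => f (t, y)) x (β x a e)) ∂μ a

lemma taylor_aux {d : ℕ} (f : EuclideanSpace ℝ (Fin d) → ℝ) (hf : ContDiff ℝ 2 f)
    (x : EuclideanSpace ℝ (Fin d)) (R : ℝ) :
    ∃ K : ℝ, 0 ≤ K ∧ ∀ y, ‖y - x‖ ≤ R →
      |f y - f x - fderiv ℝ f x (y - x)| ≤ K * ‖y - x‖ ^ 2 := by
  set F := fderiv ℝ f with hFdef
  have hFc : ContDiff ℝ 1 F := hf.fderiv_right (le_refl 2)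
  have hcont : ContinuousOn (fderiv ℝ F) (Metric.closedBall x R) :=
    (hFc.continuous_fderiv one_ne_zero).continuousOn
  obtain ⟨L, hL⟩ := (isCompact_closedBall x R).exists_bound_of_continuousOn (f := fderiv ℝ F) (by exact hcont)
  refine ⟨max L 0, le_max_right _ _, ?_⟩
  intro y hy
  set r := ‖y - x‖ with hrdef
  have hr0 : 0 ≤ r := norm_nonneg _
  have hball : Metric.closedBall x r ⊆ Metric.closedBall x R :=
    Metric.closedBall_subset_closedBall hy
  have hFlip : ∀ z ∈ Metric.closedBall x r, ‖F z - F x‖ ≤ max L 0 * r := by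
    intro z hz
    have h1 : ‖F z - F x‖ ≤ max L 0 * ‖z - x‖ :=
      (convex_closedBall x R).norm_image_sub_le_of_norm_fderiv_le
        (fun w _ => (hFc.differentiable one_ne_zero) w)
        (fun w hw => le_trans (hL w hw) (le_max_left _ _))
        (Metric.mem_closedBall_self (le_trans hr0 hy)) (hball hz)
    refine h1.trans (mul_le_mul_of_nonneg_left ?_ (le_max_right L 0))
    simpa [dist_eq_norm] using Metric.mem_closedBall.mp hz
  have := (convex_closedBall x r).norm_image_sub_le_of_norm_hasFDerivWithin_le'
    (f := f) (f' := F) (φ := F x) (C := max L 0 * r)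
    (fun w _ => ((hf.differentiable two_ne_zero) w).hasFDerivAt.hasFDerivWithinAt)
    hFlip (Metric.mem_closedBall_self hr0)
    (Metric.mem_closedBall.mpr (by rw [dist_eq_norm]))
  calc |f y - f x - F x (y - x)| ≤ max L 0 * r * ‖y - x‖ := by
        simpa [Real.norm_eq_abs] using this
    _ = max L 0 * r ^ 2 := by rw [← hrdef]; ring

/-- Uniform convergence of the small-jump nonlocal terms of the glued test functions
`ψ_ε = χ_ε ψ + (1 − χ_ε) φ` to the one of `φ`, as `ε → 0⁺`. -/
theorem stmt14 {d k : ℕ} {A : Type*} (C δ : ℝ) (hC : 0 < C) (hδ : 0 < δ)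
    (Eset : Set (EuclideanSpace ℝ (Fin k)))
    (μ : A → Measure (EuclideanSpace ℝ (Fin k)))
    (β : EuclideanSpace ℝ (Fin d) → A → EuclideanSpace ℝ (Fin k) → EuclideanSpace ℝ (Fin d))
    (hβbound : ∀ x a e, ‖β x a e‖ ≤ C * (1 + ‖x‖) * min 1 ‖e‖)
    (hβmeas : ∀ x a, Measurable (β x a))
    (hint : ∀ a : A, IntegrableOn (fun e => min 1 (‖e‖ ^ 2)) Eset (μ a))
    (hlam : ∀ c > (0 : ℝ), ∃ ε₀ > (0 : ℝ), ∀ ε : ℝ, 0 < ε → ε ≤ ε₀ → ∀ a : A,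
      ∫ e in Eset ∩ {e | ‖e‖ ≤ δ}, min (min 1 (‖e‖ ^ 2)) ε ∂μ a ≤ c)
    (t : ℝ) (x : EuclideanSpace ℝ (Fin d))
    (ψ φ : ℝ × EuclideanSpace ℝ (Fin d) → ℝ)
    (hψ : ContDiff ℝ 2 ψ) (hφ : ContDiff ℝ 2 φ)
    (hval : ψ (t, x) = φ (t, x))
    (hjet : fderiv ℝ ψ (t, x) = fderiv ℝ φ (t, x))
    (χ : ℝ → ℝ × EuclideanSpace ℝ (Fin d) → ℝ)
    (hχ : ∀ ε : ℝ, 0 < ε → ContDiff ℝ 2 (χ ε) ∧ (∀ p, χ ε p ∈ Set.Icc (0 : ℝ) 1) ∧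
      (∀ p ∈ Metric.ball (t, x) ε, χ ε p = 1) ∧
      (∀ p ∉ Metric.ball (t, x) (2 * ε), χ ε p = 0)) :
    ∀ c > (0 : ℝ), ∃ ε₀ > (0 : ℝ), ∀ ε : ℝ, 0 < ε → ε ≤ ε₀ → ∀ a : A,
      |I1 μ Eset δ β t x (fun p => χ ε p * ψ p + (1 - χ ε p) * φ p) a
        - I1 μ Eset δ β t x φ a| ≤ c := by
  classical
  -- the inclusion map and its derivative
  set ι : EuclideanSpace ℝ (Fin d) → ℝ × EuclideanSpace ℝ (Fin d) := fun y => (t, y) with hιdef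
  have hιC : ContDiff ℝ 2 ι := contDiff_const.prodMk contDiff_id
  set ι' : EuclideanSpace ℝ (Fin d) →L[ℝ] ℝ × EuclideanSpace ℝ (Fin d) :=
    (0 : EuclideanSpace ℝ (Fin d) →L[ℝ] ℝ).prod (ContinuousLinearMap.id ℝ _) with hι'def
  have hιF : HasFDerivAt ι ι' x := HasFDerivAt.prodMk (hasFDerivAt_const t x) (hasFDerivAt_id x)
  -- the difference h = ψ - φ
  set h : ℝ × EuclideanSpace ℝ (Fin d) → ℝ := fun p => ψ p - φ p with hhdef
  have hhC : ContDiff ℝ 2 h := hψ.sub hφ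
  have hh0 : h (t, x) = 0 := by simp [hhdef, hval]
  have hhD : fderiv ℝ h (t, x) = 0 := by
    rw [hhdef, fderiv_fun_sub ((hψ.differentiable two_ne_zero) (t, x))
      ((hφ.differentiable two_ne_zero) (t, x)), hjet, sub_self]
  have hsechC : ContDiff ℝ 2 (fun y => h (t, y)) := hhC.comp hιC
  have hsecφC : ContDiff ℝ 2 (fun y => φ (t, y)) := hφ.comp hιC
  -- derivative of the section of h vanishes at x
  have hsechD : HasFDerivAt (fun y => h (t, y)) (0 : EuclideanSpace ℝ (Fin d) →L[ℝ] ℝ) x := by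
    have h1 : HasFDerivAt h (fderiv ℝ h (t, x)) (ι x) :=
      ((hhC.differentiable two_ne_zero) (t, x)).hasFDerivAt
    have h2 := h1.comp x hιF
    rw [hhD, ContinuousLinearMap.zero_comp] at h2
    exact h2
  have hsechD' : fderiv ℝ (fun y => h (t, y)) x = 0 := hsechD.fderiv
  -- Taylor bounds
  set R : ℝ := C * (1 + ‖x‖) with hRdef
  have hR0 : 0 < R := by positivity
  obtain ⟨Kφ, hKφ0, hKφ⟩ := taylor_aux (fun y => φ (t, y)) hsecφC x R
  obtain ⟨Kh, hKh0, hKh⟩ := taylor_aux (fun y => h (t, y)) hsechC x 1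
  have hKh' : ∀ y : EuclideanSpace ℝ (Fin d), ‖y - x‖ ≤ 1 → |h (t, y)| ≤ Kh * ‖y - x‖ ^ 2 := by
    intro y hy
    have := hKh y hy
    simpa [hsechD', hh0] using this
  set M : ℝ := max (R ^ 2) 1 with hMdef
  have hM1 : (1 : ℝ) ≤ M := le_max_right _ _
  have hM0 : (0 : ℝ) < M := lt_of_lt_of_le one_pos hM1
  set D : ℝ := (Kh + 1) * M with hDdef
  have hD0 : (0 : ℝ) < D := by positivity
  intro c hc
  obtain ⟨ε₁, hε₁, hlam'⟩ := hlam (c / D) (by positivity)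
  refine ⟨min (1/2) (Real.sqrt (M * ε₁ / 4)), by positivity, ?_⟩
  intro ε hε hεle a
  obtain ⟨hχC, hχ01, hχ1, hχ0⟩ := hχ ε hε
  have hεhalf : ε ≤ 1/2 := le_trans hεle (min_le_left _ _)
  -- choice of the small parameter for hlam
  set ε' : ℝ := 4 * ε ^ 2 / M with hε'def
  have hε'0 : 0 < ε' := by positivity
  have hε'le : ε' ≤ ε₁ := by
    have h1 : ε ≤ Real.sqrt (M * ε₁ / 4) := le_trans hεle (min_le_right _ _)
    have h2 : ε ^ 2 ≤ M * ε₁ / 4 := by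
      have := pow_le_pow_left₀ hε.le h1 2
      rwa [Real.sq_sqrt (by positivity)] at this
    rw [hε'def, div_le_iff₀ hM0]
    linarith
  -- the glued function and its pieces
  set g : ℝ × EuclideanSpace ℝ (Fin d) → ℝ := fun p => χ ε p * h p with hgdef
  have hgC : ContDiff ℝ 2 g := hχC.mul hhC
  have hg0 : g (t, x) = 0 := by simp [hgdef, hh0]
  -- derivative of the section of g vanishes at x
  have hsecgD : HasFDerivAt (fun y => g (t, y)) (0 : EuclideanSpace ℝ (Fin d) →L[ℝ] ℝ) x := by
    have hχd : HasFDerivAt (fun y => χ ε (t, y))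
        (fderiv ℝ (fun y => χ ε (t, y)) x) x :=
      (((hχC.comp hιC).differentiable two_ne_zero) x).hasFDerivAt
    have := hχd.mul hsechD
    simp [hh0] at this
    exact this
  -- the key fderiv identity
  have hDeq : fderiv ℝ (fun y => χ ε (t, y) * ψ (t, y) + (1 - χ ε (t, y)) * φ (t, y)) x
      = fderiv ℝ (fun y => φ (t, y)) x := by
    have heq : (fun y => χ ε (t, y) * ψ (t, y) + (1 - χ ε (t, y)) * φ (t, y))
        = fun y => φ (t, y) + g (t, y) := by
      funext y; simp only [hgdef, hhdef]; ring
    rw [heq]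
    have h2 : HasFDerivAt (fun y => φ (t, y) + g (t, y))
        (fderiv ℝ (fun y => φ (t, y)) x + 0) x :=
      ((hsecφC.differentiable two_ne_zero x).hasFDerivAt).add hsecgD
    rw [add_zero] at h2
    exact h2.fderiv
  -- notation for the set and the integrands
  set S : Set (EuclideanSpace ℝ (Fin k)) := Eset ∩ {e | ‖e‖ ≤ δ} with hSdef
  set s : EuclideanSpace ℝ (Fin k) → ℝ := fun e => min 1 (‖e‖ ^ 2) with hsdef
  have hs0 : ∀ e, 0 ≤ s e := fun e => le_min zero_le_one (by positivity)
  have hs1 : ∀ e, s e ≤ 1 := fun e => min_le_left _ _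
  set Iφ : EuclideanSpace ℝ (Fin k) → ℝ := fun e =>
    φ (t, x + β x a e) - φ (t, x) - fderiv ℝ (fun y => φ (t, y)) x (β x a e) with hIφdef
  set G : EuclideanSpace ℝ (Fin k) → ℝ := fun e => g (t, x + β x a e) with hGdef
  -- basic bounds on β
  have hβR : ∀ e, ‖β x a e‖ ≤ R * min 1 ‖e‖ := fun e => hβbound x a e
  have hβR' : ∀ e, ‖β x a e‖ ≤ R := by
    intro e
    refine (hβR e).trans ?_
    have := mul_le_mul_of_nonneg_left (min_le_left 1 ‖e‖) hR0.le
    simpa using this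
  have hβsq : ∀ e, ‖β x a e‖ ^ 2 ≤ R ^ 2 * s e := by
    intro e
    have h1 : ‖β x a e‖ ^ 2 ≤ (R * min 1 ‖e‖) ^ 2 :=
      pow_le_pow_left₀ (norm_nonneg _) (hβR e) 2
    have h2 : (min 1 ‖e‖) ^ 2 = s e := by
      rcases le_total (1 : ℝ) ‖e‖ with hle | hle
      · have h1 : (1 : ℝ) ≤ ‖e‖ ^ 2 := by
          calc (1 : ℝ) = 1 ^ 2 := (one_pow 2).symm
            _ ≤ ‖e‖ ^ 2 := pow_le_pow_left₀ zero_le_one hle 2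
        simp [hsdef, min_eq_left hle, min_eq_left h1]
      · have : ‖e‖ ^ 2 ≤ 1 := by
          calc ‖e‖ ^ 2 ≤ 1 ^ 2 := pow_le_pow_left₀ (norm_nonneg e) hle 2
            _ = 1 := one_pow 2
        simp [hsdef, min_eq_right hle, min_eq_right this]
    calc ‖β x a e‖ ^ 2 ≤ (R * min 1 ‖e‖) ^ 2 := h1
      _ = R ^ 2 * (min 1 ‖e‖) ^ 2 := by ring
      _ = R ^ 2 * s e := by rw [h2]
  -- bound on Iφ
  have hIφbound : ∀ e, |Iφ e| ≤ Kφ * R ^ 2 * s e := by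
    intro e
    have hy : ‖x + β x a e - x‖ ≤ R := by
      rw [add_sub_cancel_left]; exact hβR' e
    have := hKφ (x + β x a e) hy
    rw [add_sub_cancel_left] at this
    calc |Iφ e| ≤ Kφ * ‖β x a e‖ ^ 2 := this
      _ ≤ Kφ * (R ^ 2 * s e) := mul_le_mul_of_nonneg_left (hβsq e) hKφ0
      _ = Kφ * R ^ 2 * s e := by ring
  -- bound on G
  have hGbound : ∀ e, |G e| ≤ (Kh + 1) * (M * min (s e) ε') := by
    intro e
    have hmin0 : 0 ≤ min (s e) ε' := le_min (hs0 e) hε'0.le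
    rcases le_or_gt (2 * ε) ‖β x a e‖ with hbig | hsmall
    · -- outside the support of χ
      have hnot : (t, x + β x a e) ∉ Metric.ball ((t, x) : ℝ × EuclideanSpace ℝ (Fin d)) (2 * ε) := by
        simp only [Metric.mem_ball, Prod.dist_eq, dist_self, not_lt]
        have : dist (x + β x a e) x = ‖β x a e‖ := by
          rw [dist_eq_norm, add_sub_cancel_left]
        rw [this]
        exact le_max_of_le_right hbig
      have : G e = 0 := by simp [hGdef, hgdef, hχ0 _ hnot]
      rw [this, abs_zero]
      positivity
    · -- inside: quadratic Taylor bound on h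
      have hrad : ‖x + β x a e - x‖ ≤ 1 := by
        rw [add_sub_cancel_left]
        linarith
      have hhb : |h (t, x + β x a e)| ≤ Kh * ‖β x a e‖ ^ 2 := by
        have := hKh' (x + β x a e) hrad
        rwa [add_sub_cancel_left] at this
      have hχb : |χ ε (t, x + β x a e)| ≤ 1 := by
        obtain ⟨h0, h1⟩ := hχ01 (t, x + β x a e)
        rw [abs_of_nonneg h0]; exact h1
      have hGe : |G e| ≤ Kh * ‖β x a e‖ ^ 2 := by
        rw [hGdef]
        simp only [hgdef, abs_mul]
        calc |χ ε (t, x + β x a e)| * |h (t, x + β x a e)|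
            ≤ 1 * (Kh * ‖β x a e‖ ^ 2) :=
              mul_le_mul hχb hhb (abs_nonneg _) zero_le_one
          _ = Kh * ‖β x a e‖ ^ 2 := one_mul _
      have hβmin : ‖β x a e‖ ^ 2 ≤ M * min (s e) ε' := by
        have hb1 : ‖β x a e‖ ^ 2 ≤ R ^ 2 * s e := hβsq e
        have hb2 : ‖β x a e‖ ^ 2 ≤ 4 * ε ^ 2 := by
          calc ‖β x a e‖ ^ 2 ≤ (2 * ε) ^ 2 := pow_le_pow_left₀ (norm_nonneg _) hsmall.le 2
            _ = 4 * ε ^ 2 := by ring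
        rcases le_total (s e) ε' with hle | hle
        · rw [min_eq_left hle]
          calc ‖β x a e‖ ^ 2 ≤ R ^ 2 * s e := hb1
            _ ≤ M * s e := mul_le_mul_of_nonneg_right (le_max_left _ _) (hs0 e)
        · rw [min_eq_right hle, hε'def, mul_div_cancel₀ _ (ne_of_gt hM0)]
          exact hb2
      calc |G e| ≤ Kh * ‖β x a e‖ ^ 2 := hGe
        _ ≤ Kh * (M * min (s e) ε') := mul_le_mul_of_nonneg_left hβmin hKh0
        _ ≤ (Kh + 1) * (M * min (s e) ε') :=
              mul_le_mul_of_nonneg_right (by linarith) (by positivity)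
  -- measurability
  have hmap : Measurable (fun e : EuclideanSpace ℝ (Fin k) => ((t, x + β x a e) : ℝ × EuclideanSpace ℝ (Fin d))) :=
    measurable_const.prodMk ((hβmeas x a).const_add x)
  have hIφmeas : Measurable Iφ := by
    have m1 : Measurable (fun e : EuclideanSpace ℝ (Fin k) => φ (t, x + β x a e)) :=
      hφ.continuous.measurable.comp hmap
    have m3 : Measurable (fun e : EuclideanSpace ℝ (Fin k) =>
        fderiv ℝ (fun y => φ (t, y)) x (β x a e)) :=
      (fderiv ℝ (fun y => φ (t, y)) x).continuous.measurable.comp (hβmeas x a)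
    exact (m1.sub measurable_const).sub m3
  have hGmeas : Measurable G :=
    hgC.continuous.measurable.comp hmap
  have hsmeas : Measurable s :=
    (continuous_const.min ((continuous_norm.pow 2))).measurable
  -- integrability
  have hintS : IntegrableOn s S (μ a) := (hint a).mono_set Set.inter_subset_left
  have hIφint : IntegrableOn Iφ S (μ a) := by
    refine Integrable.mono' (hintS.const_mul (Kφ * R ^ 2)) hIφmeas.aestronglyMeasurable ?_
    exact Filter.Eventually.of_forall fun e => by
      rw [Real.norm_eq_abs]; exact hIφbound e
  have hminint : IntegrableOn (fun e => min (s e) ε') S (μ a) := by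
    refine Integrable.mono' hintS (hsmeas.min measurable_const).aestronglyMeasurable ?_
    exact Filter.Eventually.of_forall fun e => by
      rw [Real.norm_eq_abs, abs_of_nonneg (le_min (hs0 e) hε'0.le)]
      exact min_le_left _ _
  have hGint : IntegrableOn G S (μ a) := by
    refine Integrable.mono' (hminint.const_mul ((Kh + 1) * M)) hGmeas.aestronglyMeasurable ?_
    exact Filter.Eventually.of_forall fun e => by
      rw [Real.norm_eq_abs]
      calc |G e| ≤ (Kh + 1) * (M * min (s e) ε') := hGbound e
        _ = (Kh + 1) * M * min (s e) ε' := by ring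
  -- the integral identity
  have hkey : I1 μ Eset δ β t x (fun p => χ ε p * ψ p + (1 - χ ε p) * φ p) a
      - I1 μ Eset δ β t x φ a = ∫ e in S, G e ∂μ a := by
    have hptw : ∀ e, ((fun p => χ ε p * ψ p + (1 - χ ε p) * φ p) (t, x + β x a e)
        - (fun p => χ ε p * ψ p + (1 - χ ε p) * φ p) (t, x)
        - fderiv ℝ (fun y => (fun p => χ ε p * ψ p + (1 - χ ε p) * φ p) (t, y)) x (β x a e))
        = Iφ e + G e := by
      intro e
      simp only
      rw [hDeq]
      have e1 : χ ε (t, x + β x a e) * ψ (t, x + β x a e)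
          + (1 - χ ε (t, x + β x a e)) * φ (t, x + β x a e)
          = φ (t, x + β x a e) + g (t, x + β x a e) := by
        simp only [hgdef, hhdef]; ring
      have e2 : χ ε (t, x) * ψ (t, x) + (1 - χ ε (t, x)) * φ (t, x)
          = φ (t, x) + g (t, x) := by
        simp only [hgdef, hhdef]; ring
      rw [e1, e2, hg0]
      simp only [hIφdef, hGdef]
      ring
    rw [I1, I1]
    rw [show (fun e => ((fun p => χ ε p * ψ p + (1 - χ ε p) * φ p) (t, x + β x a e)
        - (fun p => χ ε p * ψ p + (1 - χ ε p) * φ p) (t, x)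
        - fderiv ℝ (fun y => (fun p => χ ε p * ψ p + (1 - χ ε p) * φ p) (t, y)) x (β x a e)))
        = fun e => Iφ e + G e from funext hptw]
    rw [integral_add hIφint hGint]
    simp only [hIφdef]
    ring
  rw [hkey]
  -- final estimate
  have habs : |∫ e in S, G e ∂μ a| ≤ ∫ e in S, (Kh + 1) * M * min (s e) ε' ∂μ a := by
    refine le_trans (by simpa [Real.norm_eq_abs] using
      norm_integral_le_integral_norm (μ := (μ a).restrict S) G) ?_
    refine integral_mono hGint.abs (hminint.const_mul ((Kh + 1) * M)) ?_
    intro e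
    calc |G e| ≤ (Kh + 1) * (M * min (s e) ε') := hGbound e
      _ = (Kh + 1) * M * min (s e) ε' := by ring
  refine le_trans habs ?_
  rw [integral_const_mul]
  have hμ := hlam' ε' hε'0 hε'le a
  calc (Kh + 1) * M * ∫ e in S, min (s e) ε' ∂μ a
      ≤ (Kh + 1) * M * (c / D) := by
        refine mul_le_mul_of_nonneg_left ?_ (by positivity)
        simpa [hsdef] using hμ
    _ = c := by
        rw [← hDdef, mul_comm, div_mul_cancel₀ c (ne_of_gt hD0)]
end
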